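/- Funk parabola of type 1: let y₀ ∈ (−1,1) and F = (f₀,g₀) ∈ B² with g₀ ≠ y₀. Put σ₁ = 1 + sgn(y₀−g₀)·y₀, B = −2f₀/σ₁, C = (f₀² + (y₀−g₀)² + 2|y₀−g₀|)/σ₁², E = −2|y₀−g₀|/σ₁, and for a point (x,y) set ȳ = 1 + sgn(y₀−g₀)·y. Let 𝓔 = {(x,y) ∈ ℝ² : x² + B·x·ȳ + C·ȳ² + E·ȳ = 0}. Then the set of points P = (x,y) ∈ B² with P ≠ F satisfying d_F(F,P) = ln ρ(y₀,y) equals 𝓔 \ {(0, −sgn(y₀−g₀))}. -/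

import Mathlib

/-- The Funk distance on the open unit ball of Euclidean n-space:
`d_F(P,Q) = ln((√k − ⟨P, Q−P⟩)/(√k − ⟨Q, Q−P⟩))` with
`k = ⟨P, Q−P⟩² + (1 − ‖P‖²)‖Q−P‖²`. -/
noncomputable def funkDist {n : ℕ} (P Q : EuclideanSpace ℝ (Fin n)) : ℝ :=
  Real.log
    ((Real.sqrt ((inner ℝ P (Q - P) : ℝ) ^ 2 + (1 - ‖P‖ ^ 2) * ‖Q - P‖ ^ 2) - (inner ℝ P (Q - P) : ℝ)) /
     (Real.sqrt ((inner ℝ P (Q - P) : ℝ) ^ 2 + (1 - ‖P‖ ^ 2) * ‖Q - P‖ ^ 2) - (inner ℝ Q (Q - P) : ℝ)))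

/-- `ρ(ε,η) = (1 + sgn(ε−η)·ε)/(1 + sgn(ε−η)·η)`. -/
noncomputable def rho (ε η : ℝ) : ℝ :=
  (1 + Real.sign (ε - η) * ε) / (1 + Real.sign (ε - η) * η)

/-- The point `(a,b)` of the Euclidean plane. -/
def pt (a b : ℝ) : EuclideanSpace ℝ (Fin 2) := WithLp.toLp 2 ![a, b]

lemma inner_pt (a b c d : ℝ) : (inner ℝ (pt a b) (pt c d) : ℝ) = a * c + b * d := by
  simp [pt, PiLp.inner_apply, Fin.sum_univ_two, RCLike.inner_apply, mul_comm]

lemma pt_sub (a b c d : ℝ) : pt a b - pt c d = pt (a - c) (b - d) := by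
  ext i; fin_cases i <;> simp [pt]

lemma norm_pt_sq (a b : ℝ) : ‖pt a b‖ ^ 2 = a ^ 2 + b ^ 2 := by
  rw [← real_inner_self_eq_norm_sq, inner_pt]; ring

lemma norm_pt_lt_one (a b : ℝ) : ‖pt a b‖ < 1 ↔ a ^ 2 + b ^ 2 < 1 := by
  rw [← norm_pt_sq]
  constructor
  · intro h; nlinarith [norm_nonneg (pt a b)]
  · intro h; nlinarith [norm_nonneg (pt a b), sq_nonneg (‖pt a b‖ - 1), sq_nonneg (‖pt a b‖ + 1)]

lemma pt_eq_iff (a b c d : ℝ) : pt a b = pt c d ↔ a = c ∧ b = d := by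
  constructor
  · intro h; have h' := congrArg WithLp.ofLp h; exact ⟨by simpa [pt] using congrFun h' 0, by simpa [pt] using congrFun h' 1⟩
  · rintro ⟨rfl, rfl⟩; rfl

lemma funkDist_pt (f g x y : ℝ) :
    funkDist (pt f g) (pt x y) =
      Real.log ((Real.sqrt ((f * (x - f) + g * (y - g)) ^ 2
          + (1 - (f ^ 2 + g ^ 2)) * ((x - f) ^ 2 + (y - g) ^ 2)) - (f * (x - f) + g * (y - g))) /
        (Real.sqrt ((f * (x - f) + g * (y - g)) ^ 2
          + (1 - (f ^ 2 + g ^ 2)) * ((x - f) ^ 2 + (y - g) ^ 2)) - (x * (x - f) + y * (y - g)))) := by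
  unfold funkDist
  rw [pt_sub, inner_pt, inner_pt, norm_pt_sq, norm_pt_sq]

section AuxIdentities
variable {s Y F G X yv : ℝ}

lemma aux1 (hs1 : s = 1 ∨ s = -1) :
    ((F*(X-F)+G*(yv-G))^2 + (1-(F^2+G^2))*((X-F)^2+(yv-G)^2)) * (Y - yv)^2
      - ((X*(X-F)+yv*(yv-G))*(1+s*Y) - (F*(X-F)+G*(yv-G))*(1+s*yv))^2
    = -((X-F)^2+(yv-G)^2) *
      ((1+s*Y)^2*X^2 - 2*F*(1+s*Y)*X*(1+s*yv) + (F^2+(Y-G)^2+2*(s*(Y-G)))*(1+s*yv)^2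
        - 2*(s*(Y-G))*(1+s*Y)*(1+s*yv)) := by
  rcases hs1 with rfl | rfl <;> ring

lemma aux2 (hs1 : s = 1 ∨ s = -1) :
    (1+s*Y)^2*X^2 - 2*F*(1+s*Y)*X*(1+s*yv) + (F^2+(Y-G)^2+2*(s*(Y-G)))*(1+s*yv)^2
      - 2*(s*(Y-G))*(1+s*Y)*(1+s*yv)
    = ((1+s*Y)*X - F*(1+s*yv))^2
      - (s*(Y-G))*(1+s*yv)*(2*(1+s*Y) - (s*(Y-G)+2)*(1+s*yv)) := by
  rcases hs1 with rfl | rfl <;> ring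

lemma aux3 (hs1 : s = 1 ∨ s = -1) :
    (1+s*Y)^2*(1-X^2-yv^2)
    = (1+s*yv)*(2*((1+s*Y)*(1-F*X-G*yv) - (1+s*yv)*(1-F^2-G^2)) + (1+s*yv)*(1-F^2-G^2))
      - ((1+s*Y)^2*X^2 - 2*F*(1+s*Y)*X*(1+s*yv) + (F^2+(Y-G)^2+2*(s*(Y-G)))*(1+s*yv)^2
        - 2*(s*(Y-G))*(1+s*Y)*(1+s*yv)) := by
  rcases hs1 with rfl | rfl <;> ring

lemma aux4 (hs1 : s = 1 ∨ s = -1) :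
    (1+s*Y)*((X*(X-F)+yv*(yv-G))*(1+s*Y) - (F*(X-F)+G*(yv-G))*(1+s*yv))
    = ((1+s*Y)^2*X^2 - 2*F*(1+s*Y)*X*(1+s*yv) + (F^2+(Y-G)^2+2*(s*(Y-G)))*(1+s*yv)^2
        - 2*(s*(Y-G))*(1+s*Y)*(1+s*yv))
      + ((1+s*Y)-(1+s*yv))*((1+s*Y)*(1-F*X-G*yv) - (1+s*yv)*(1-F^2-G^2)) := by
  rcases hs1 with rfl | rfl <;> ring

lemma aux5 (hs1 : s = 1 ∨ s = -1) :
    (1+s*Y)^2*F^2 - 2*F*(1+s*Y)*F*(1+s*G) + (F^2+(Y-G)^2+2*(s*(Y-G)))*(1+s*G)^2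
      - 2*(s*(Y-G))*(1+s*Y)*(1+s*G)
    = (s*(Y-G))^2*(F^2+G^2-1) := by
  rcases hs1 with rfl | rfl <;> ring

lemma aux6 (hs1 : s = 1 ∨ s = -1) {cp c2 c1 Ap : ℝ}
    (hcp : cp = -(1-G^2+(1+s*Y)*s*G))
    (hc2 : c2 = cp^2 + F^2*(s*(Y-G))*(s*(Y-G)+2))
    (hc1 : c1 = 2*(1+s*Y)*(1+s*G)*cp - 2*F^2*(s*(Y-G))*(1+s*Y))
    (hAp : Ap = (1+s*Y)*(1+s*G) + cp*(1+s*yv)) :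
    4*c2*(Ap^2 - F^2*((s*(Y-G))*(1+s*yv)*(2*(1+s*Y) - (s*(Y-G)+2)*(1+s*yv))))
    = (2*c2*(1+s*yv)+c1)^2 + 4*F^2*(1-F^2-G^2)*(1+s*Y)^2*(Y-G)^2 := by
  subst hcp; subst hc2; subst hc1; subst hAp
  rcases hs1 with rfl | rfl <;> ring

lemma aux7 (hs1 : s = 1 ∨ s = -1) :
    (1+s*Y)*(1+s*G)*(s*(Y-G)+2) - 2*(1+s*Y)*(1-G^2+(1+s*Y)*s*G)
    = (1+s*Y)*(1-s*G)*(s*(Y-G)) := by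
  rcases hs1 with rfl | rfl <;> ring

lemma aux8 (hs1 : s = 1 ∨ s = -1) :
    (1+s*Y)*(1-F*X-G*yv) - (1+s*yv)*(1-F^2-G^2)
    = ((1+s*Y)*(1+s*G) + (-(1-G^2+(1+s*Y)*s*G))*(1+s*yv)) - F*((1+s*Y)*X - F*(1+s*yv)) := by
  rcases hs1 with rfl | rfl <;> ring

lemma aux9 (hs1 : s = 1 ∨ s = -1) :
    ((1+s*Y)-(1+s*yv))^2 = (Y-yv)^2 := by
  rcases hs1 with rfl | rfl <;> ring

end AuxIdentities

set_option maxHeartbeats 1000000 in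
/-- The (non-degenerate) type-1 Funk parabola with focus `F = (f₀,g₀)` and directrix
`y = y₀` is the Euclidean ellipse `x² + Bxȳ + Cȳ² + Eȳ = 0` (in `x` and
`ȳ = 1 + sgn(y₀−g₀)·y`) minus the point `(0, −sgn(y₀−g₀))`. -/
theorem funk_parabola_stmt7 (y₀ f₀ g₀ s σ₁ B C E : ℝ)
    (hy₀ : -1 < y₀ ∧ y₀ < 1) (hF : ‖pt f₀ g₀‖ < 1) (hgy : g₀ ≠ y₀)
    (hs : s = Real.sign (y₀ - g₀)) (hσ : σ₁ = 1 + s * y₀)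
    (hB : B = -2 * f₀ / σ₁)
    (hC : C = (f₀ ^ 2 + (y₀ - g₀) ^ 2 + 2 * |y₀ - g₀|) / σ₁ ^ 2)
    (hE : E = -2 * |y₀ - g₀| / σ₁) :
    {p : ℝ × ℝ | ‖pt p.1 p.2‖ < 1 ∧ pt p.1 p.2 ≠ pt f₀ g₀ ∧
        funkDist (pt f₀ g₀) (pt p.1 p.2) = Real.log (rho y₀ p.2)} =
      {p : ℝ × ℝ | p.1 ^ 2 + B * p.1 * (1 + s * p.2) + C * (1 + s * p.2) ^ 2
          + E * (1 + s * p.2) = 0} \ {((0 : ℝ), -s)} := by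
  obtain ⟨hy0l, hy0r⟩ := hy₀
  have hfg : f₀ ^ 2 + g₀ ^ 2 < 1 := (norm_pt_lt_one f₀ g₀).mp hF
  have hg0l : -1 < g₀ := by nlinarith [sq_nonneg f₀, sq_nonneg (g₀ + 1)]
  have hg0r : g₀ < 1 := by nlinarith [sq_nonneg f₀, sq_nonneg (g₀ - 1)]
  have hs1 : s = 1 ∨ s = -1 := by
    rcases lt_or_gt_of_ne hgy with h | h
    · left; rw [hs]; exact Real.sign_of_pos (by linarith)
    · right; rw [hs]; exact Real.sign_of_neg (by linarith)
  have hδpos : 0 < s * (y₀ - g₀) := by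
    rcases lt_or_gt_of_ne hgy with h | h
    · rw [hs, Real.sign_of_pos (show (0:ℝ) < y₀ - g₀ by linarith)]; linarith
    · rw [hs, Real.sign_of_neg (show y₀ - g₀ < 0 by linarith)]; linarith
  have habs : |y₀ - g₀| = s * (y₀ - g₀) := by
    rcases lt_or_gt_of_ne hgy with h | h
    · rw [hs, Real.sign_of_pos (show (0:ℝ) < y₀ - g₀ by linarith),
        abs_of_pos (show (0:ℝ) < y₀ - g₀ by linarith)]; ring
    · rw [hs, Real.sign_of_neg (show y₀ - g₀ < 0 by linarith),
        abs_of_neg (show y₀ - g₀ < 0 by linarith)]; ring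
  have hσpos : 0 < 1 + s * y₀ := by rcases hs1 with h | h <;> rw [h] <;> linarith
  have hσne : (1 : ℝ) + s * y₀ ≠ 0 := ne_of_gt hσpos
  have hδlt2 : s * (y₀ - g₀) < 2 := by rcases hs1 with h | h <;> rw [h] <;> linarith
  ext ⟨x, y⟩
  simp only [Set.mem_setOf_eq, Set.mem_diff, Set.mem_singleton_iff, Prod.mk.injEq]
  have EllQ : (x ^ 2 + B * x * (1 + s * y) + C * (1 + s * y) ^ 2 + E * (1 + s * y) = 0) ↔
      ((1+s*y₀)^2*x^2 - 2*f₀*(1+s*y₀)*x*(1+s*y)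
        + (f₀^2+(y₀-g₀)^2+2*(s*(y₀-g₀)))*(1+s*y)^2
        - 2*(s*(y₀-g₀))*(1+s*y₀)*(1+s*y) = 0) := by
    rw [hB, hC, hE, habs, hσ]
    constructor
    · intro h
      field_simp at h
      have h' : ((1+s*y₀)^2) * ((1+s*y₀)^2*x^2 - 2*f₀*(1+s*y₀)*x*(1+s*y)
          + (f₀^2+(y₀-g₀)^2+2*(s*(y₀-g₀)))*(1+s*y)^2
          - 2*(s*(y₀-g₀))*(1+s*y₀)*(1+s*y)) = 0 := by linear_combination ((1+s*y₀)^2) * h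
      rcases mul_eq_zero.mp h' with h'' | h''
      · exact absurd h'' (pow_ne_zero 2 hσne)
      · exact h''
    · intro h
      field_simp
      linear_combination h
  constructor
  · rintro ⟨hP1, hPF, heq⟩
    have hP : x ^ 2 + y ^ 2 < 1 := (norm_pt_lt_one x y).mp hP1
    have hxyF : ¬(x = f₀ ∧ y = g₀) := by
      rintro ⟨h1, h2⟩; exact hPF (by rw [h1, h2])
    have hyl : -1 < y := by nlinarith only [hP, sq_nonneg x, sq_nonneg (y + 1)]
    have hyr : y < 1 := by nlinarith only [hP, sq_nonneg x, sq_nonneg (y - 1)]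
    have hn2pos : 0 < (x - f₀) ^ 2 + (y - g₀) ^ 2 := by
      rcases not_and_or.mp hxyF with h | h
      · have := mul_self_pos.mpr (sub_ne_zero_of_ne h)
        nlinarith only [this, sq_nonneg (y - g₀)]
      · have := mul_self_pos.mpr (sub_ne_zero_of_ne h)
        nlinarith only [this, sq_nonneg (x - f₀)]
    rw [funkDist_pt] at heq
    set a := f₀ * (x - f₀) + g₀ * (y - g₀) with ha
    set b := x * (x - f₀) + y * (y - g₀) with hbd
    set n2 := (x - f₀) ^ 2 + (y - g₀) ^ 2 with hn2d
    set K := a ^ 2 + (1 - (f₀ ^ 2 + g₀ ^ 2)) * n2 with hKd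
    set r := Real.sqrt K with hrd
    have hK0 : 0 < K := by
      rw [hKd]
      nlinarith only [sq_nonneg a, mul_pos (show (0:ℝ) < 1 - (f₀ ^ 2 + g₀ ^ 2) by
        linarith only [hfg]) hn2pos]
    have hr2 : r ^ 2 = K := Real.sq_sqrt hK0.le
    have hr0 : 0 < r := Real.sqrt_pos.mpr hK0
    have hab : a < b := by
      have h1 : b - a = n2 := by rw [ha, hbd, hn2d]; ring
      linarith
    have har : a < r := by
      have h1 : K - a ^ 2 = (1 - (f₀ ^ 2 + g₀ ^ 2)) * n2 := by rw [hKd]; ring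
      nlinarith only [h1, hr2, hr0, sq_nonneg (r - a), sq_nonneg (r + a),
        mul_pos (show (0:ℝ) < 1 - (f₀ ^ 2 + g₀ ^ 2) by linarith only [hfg]) hn2pos]
    have hbr : b < r := by
      have h1 : K - b ^ 2 = n2 * (1 - x ^ 2 - y ^ 2) := by
        rw [hKd, ha, hbd, hn2d]; ring
      nlinarith only [h1, hr2, hr0, sq_nonneg (r - b), sq_nonneg (r + b),
        mul_pos hn2pos (show (0:ℝ) < 1 - x ^ 2 - y ^ 2 by linarith only [hP])]
    have hfpos : 0 < (r - a) / (r - b) := div_pos (by linarith) (by linarith)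
    have hfgt1 : 1 < (r - a) / (r - b) := (one_lt_div (by linarith)).mpr (by linarith)
    have key : ∀ u : ℝ, (u = 1 ∨ u = -1) → Real.sign (y₀ - y) = u → 0 < u * (y₀ - y) →
        (1+u*y₀)^2*x^2 - 2*f₀*(1+u*y₀)*x*(1+u*y)
          + (f₀^2+(y₀-g₀)^2+2*(u*(y₀-g₀)))*(1+u*y)^2
          - 2*(u*(y₀-g₀))*(1+u*y₀)*(1+u*y) = 0 := by
      intro u hu1 hsgn hupos
      have hyb : 0 < 1 + u * y := by
        rcases hu1 with rfl | rfl <;> linarith only [hyl, hyr]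
      have hyb0 : 0 < 1 + u * y₀ := by
        rcases hu1 with rfl | rfl <;> linarith only [hy0l, hy0r]
      have hrho : rho y₀ y = (1 + u * y₀) / (1 + u * y) := by
        simp only [rho, hsgn]
      rw [hrho] at heq
      have hratio := Real.log_injOn_pos (Set.mem_Ioi.mpr hfpos)
        (Set.mem_Ioi.mpr (div_pos hyb0 hyb)) heq
      rw [div_eq_div_iff (by linarith only [hbr]) (by linarith only [hyb])] at hratio
      have hMt : r * (u * (y₀ - y)) = b * (1 + u * y₀) - a * (1 + u * y) := by
        linear_combination -hratio
      have hu2 : u ^ 2 = 1 := by rcases hu1 with rfl | rfl <;> norm_num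
      have hsq : (b * (1 + u * y₀) - a * (1 + u * y)) ^ 2 = K * (y₀ - y) ^ 2 := by
        rw [← hMt, mul_pow, mul_pow, hr2, hu2]; ring
      have h1 := aux1 (s := u) (Y := y₀) (F := f₀) (G := g₀) (X := x) (yv := y) hu1
      rw [← ha, ← hbd, ← hn2d, ← hKd] at h1
      have h2 : n2 * ((1+u*y₀)^2*x^2 - 2*f₀*(1+u*y₀)*x*(1+u*y)
          + (f₀^2+(y₀-g₀)^2+2*(u*(y₀-g₀)))*(1+u*y)^2
          - 2*(u*(y₀-g₀))*(1+u*y₀)*(1+u*y)) = 0 := by linarith only [h1, hsq]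
      rcases mul_eq_zero.mp h2 with h | h
      · exact absurd h (ne_of_gt hn2pos)
      · exact h
    have contra : ∀ u : ℝ, (u = 1 ∨ u = -1) → Real.sign (y₀ - y) = u →
        0 < u * (y₀ - y) → u * (y₀ - g₀) < 0 → False := by
      intro u hu1 hsgn hupos hdneg
      have hQ := key u hu1 hsgn hupos
      have h2 := aux2 (s := u) (Y := y₀) (F := f₀) (G := g₀) (X := x) (yv := y) hu1
      have hyb : 0 < 1 + u * y := by
        rcases hu1 with rfl | rfl <;> linarith only [hyl, hyr]
      have hyblt : 1 + u * y < 1 + u * y₀ := by linarith only [hupos]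
      have hd2 : 0 < u * (y₀ - g₀) + 2 := by
        rcases hu1 with rfl | rfl <;> linarith only [hy0l, hy0r, hg0l, hg0r]
      have h3 : 0 < 2 * (1 + u * y₀) - (u * (y₀ - g₀) + 2) * (1 + u * y) := by
        linarith only [mul_neg_of_neg_of_pos hdneg hyb, hyblt]
      have h4 : u * (y₀ - g₀) * (1 + u * y) *
          (2 * (1 + u * y₀) - (u * (y₀ - g₀) + 2) * (1 + u * y)) < 0 := by
        have := mul_neg_of_neg_of_pos (mul_neg_of_neg_of_pos hdneg hyb) h3
        linarith only [this]
      linarith only [sq_nonneg ((1 + u * y₀) * x - f₀ * (1 + u * y)), hQ, h2, h4]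
    have finish_same : ((1+s*y₀)^2*x^2 - 2*f₀*(1+s*y₀)*x*(1+s*y)
          + (f₀^2+(y₀-g₀)^2+2*(s*(y₀-g₀)))*(1+s*y)^2
          - 2*(s*(y₀-g₀))*(1+s*y₀)*(1+s*y) = 0) →
        (x ^ 2 + B * x * (1 + s * y) + C * (1 + s * y) ^ 2 + E * (1 + s * y) = 0
          ∧ ¬(x = 0 ∧ y = -s)) := by
      intro hQs
      refine ⟨EllQ.mpr hQs, ?_⟩
      rintro ⟨h1, h2⟩
      rw [h1, h2] at hP
      rcases hs1 with h | h <;> rw [h] at hP <;> norm_num at hP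
    rcases lt_trichotomy y y₀ with hlt | heqy | hgt
    · have hsgn : Real.sign (y₀ - y) = 1 := Real.sign_of_pos (by linarith only [hlt])
      rcases hs1 with h | h
      · refine finish_same ?_
        rw [h]
        exact key 1 (Or.inl rfl) hsgn (by linarith only [hlt])
      · exact absurd (contra 1 (Or.inl rfl) hsgn (by linarith only [hlt])
          (by rw [h] at hδpos; linarith only [hδpos])) id
    · exfalso
      have hrho1 : rho y₀ y = 1 := by
        rw [heqy]
        simp [rho, Real.sign_zero]
      rw [hrho1, Real.log_one] at heq
      have := Real.log_pos hfgt1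
      linarith only [this, heq]
    · have hsgn : Real.sign (y₀ - y) = -1 := Real.sign_of_neg (by linarith only [hgt])
      rcases hs1 with h | h
      · exact absurd (contra (-1) (Or.inr rfl) hsgn (by linarith only [hgt])
          (by rw [h] at hδpos; linarith only [hδpos])) id
      · refine finish_same ?_
        rw [h]
        exact key (-1) (Or.inr rfl) hsgn (by linarith only [hgt])
  · rintro ⟨hEll, hne0⟩
    have hQp := EllQ.mp hEll
    have h2 := aux2 (s := s) (Y := y₀) (F := f₀) (G := g₀) (X := x) (yv := y) hs1
    have hw : ((1+s*y₀)*x - f₀*(1+s*y))^2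
        = (s*(y₀-g₀))*(1+s*y)*(2*(1+s*y₀) - (s*(y₀-g₀)+2)*(1+s*y)) := by
      linear_combination hQp - h2
    have hyb_nonneg : 0 ≤ 1 + s * y := by
      by_contra h
      push_neg at h
      have h3 : 0 < 2 * (1 + s * y₀) - (s * (y₀ - g₀) + 2) * (1 + s * y) := by
        linarith only [mul_neg_of_pos_of_neg
          (show (0:ℝ) < s * (y₀ - g₀) + 2 by linarith only [hδpos]) h, hσpos]
      have h4 : (s*(y₀-g₀))*(1+s*y)*(2*(1+s*y₀) - (s*(y₀-g₀)+2)*(1+s*y)) < 0 := by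
        have := mul_neg_of_pos_of_neg hδpos (mul_neg_of_neg_of_pos h h3)
        linarith only [this]
      linarith only [sq_nonneg ((1+s*y₀)*x - f₀*(1+s*y)), hw, h4]
    have hyb_pos : 0 < 1 + s * y := by
      rcases eq_or_lt_of_le hyb_nonneg with h | h
      · exfalso
        have hw0 : ((1+s*y₀)*x - f₀*(1+s*y))^2 = 0 := by rw [hw, ← h]; ring
        have hx0 : (1+s*y₀)*x - f₀*(1+s*y) = 0 := by
          exact pow_eq_zero_iff (n := 2) (by norm_num) |>.mp hw0
        have hx : x = 0 := by
          have hh : (1+s*y₀)*x = 0 := by rw [← h] at hx0; linarith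
          rcases mul_eq_zero.mp hh with h' | h'
          · exact absurd h' hσne
          · exact h'
        have hy : y = -s := by
          rcases hs1 with h' | h' <;> rw [h'] at h ⊢ <;> linarith only [h]
        exact hne0 ⟨hx, hy⟩
      · exact h
    have h3 : 0 ≤ 2 * (1 + s * y₀) - (s * (y₀ - g₀) + 2) * (1 + s * y) := by
      nlinarith only [sq_nonneg ((1+s*y₀)*x - f₀*(1+s*y)), hw, mul_pos hδpos hyb_pos]
    have hyblt : 1 + s * y < 1 + s * y₀ := by
      nlinarith only [h3, mul_pos hδpos hyb_pos]
    have hsg1 : 0 < 1 + s * g₀ := by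
      rcases hs1 with h | h <;> rw [h] <;> linarith only [hg0l, hg0r]
    have hsg2 : 0 < 1 - s * g₀ := by
      rcases hs1 with h | h <;> rw [h] <;> linarith only [hg0l, hg0r]
    have hApos : 0 < (1+s*y₀)*(1+s*g₀) + (-(1-g₀^2+(1+s*y₀)*s*g₀))*(1+s*y) := by
      rcases le_or_gt 0 (-(1-g₀^2+(1+s*y₀)*s*g₀)) with h | h
      · linarith only [mul_pos hσpos hsg1, mul_nonneg h hyb_nonneg]
      · have h7 := aux7 (s := s) (Y := y₀) (G := g₀) hs1
        have hprod : 0 ≤ (1-g₀^2+(1+s*y₀)*s*g₀)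
            * (2*(1+s*y₀) - (s*(y₀-g₀)+2)*(1+s*y)) :=
          mul_nonneg (by linarith only [h]) h3
        nlinarith only [h7, hprod, mul_pos (mul_pos hσpos hsg2) hδpos, hδpos]
    have hPhi : f₀^2*((s*(y₀-g₀))*(1+s*y)*(2*(1+s*y₀) - (s*(y₀-g₀)+2)*(1+s*y)))
        < ((1+s*y₀)*(1+s*g₀) + (-(1-g₀^2+(1+s*y₀)*s*g₀))*(1+s*y))^2 := by
      rcases eq_or_ne f₀ 0 with hf0 | hf0
      · rw [hf0]
        have := pow_pos hApos 2
        linarith only [this]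
      · have hf2 : 0 < f₀ ^ 2 := by positivity
        have hc2 : 0 < (-(1-g₀^2+(1+s*y₀)*s*g₀))^2 + f₀^2*(s*(y₀-g₀))*(s*(y₀-g₀)+2) := by
          nlinarith only [sq_nonneg (-(1-g₀^2+(1+s*y₀)*s*g₀)),
            mul_pos hf2 (mul_pos hδpos (show (0:ℝ) < s*(y₀-g₀)+2 by
              linarith only [hδpos]))]
        have hcert := aux6 (s := s) (Y := y₀) (F := f₀) (G := g₀) (yv := y) hs1
          rfl rfl rfl rfl
        have hyg : y₀ - g₀ ≠ 0 := sub_ne_zero_of_ne (Ne.symm hgy)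
        have h0 : 0 < (y₀ - g₀)^2 := by positivity
        have hYpos : 0 < 4*f₀^2*(1-f₀^2-g₀^2)*(1+s*y₀)^2*(y₀-g₀)^2 :=
          mul_pos (mul_pos (mul_pos (mul_pos (show (0:ℝ) < 4 by norm_num) hf2)
            (show (0:ℝ) < 1-f₀^2-g₀^2 by linarith only [hfg])) (pow_pos hσpos 2)) h0
        have h5 : 0 < 4*((-(1-g₀^2+(1+s*y₀)*s*g₀))^2 + f₀^2*(s*(y₀-g₀))*(s*(y₀-g₀)+2))
            * (((1+s*y₀)*(1+s*g₀) + (-(1-g₀^2+(1+s*y₀)*s*g₀))*(1+s*y))^2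
              - f₀^2*((s*(y₀-g₀))*(1+s*y)*(2*(1+s*y₀) - (s*(y₀-g₀)+2)*(1+s*y)))) := by
          linarith only [hcert, sq_nonneg (2*((-(1-g₀^2+(1+s*y₀)*s*g₀))^2
            + f₀^2*(s*(y₀-g₀))*(s*(y₀-g₀)+2))*(1+s*y)
            + (2*(1+s*y₀)*(1+s*g₀)*(-(1-g₀^2+(1+s*y₀)*s*g₀))
              - 2*f₀^2*(s*(y₀-g₀))*(1+s*y₀))), hYpos]
        nlinarith only [h5, hc2]
    have hG1 : 0 < (1+s*y₀)*(1-f₀*x-g₀*y) - (1+s*y)*(1-f₀^2-g₀^2) := by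
      have h8 := aux8 (s := s) (Y := y₀) (F := f₀) (G := g₀) (X := x) (yv := y) hs1
      have hfw : f₀ * ((1+s*y₀)*x - f₀*(1+s*y))
          < (1+s*y₀)*(1+s*g₀) + (-(1-g₀^2+(1+s*y₀)*s*g₀))*(1+s*y) := by
        nlinarith only [hPhi, hw, hApos,
          sq_nonneg ((1+s*y₀)*(1+s*g₀) + (-(1-g₀^2+(1+s*y₀)*s*g₀))*(1+s*y)
            + f₀ * ((1+s*y₀)*x - f₀*(1+s*y))),
          sq_nonneg ((1+s*y₀)*(1+s*g₀) + (-(1-g₀^2+(1+s*y₀)*s*g₀))*(1+s*y)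
            - f₀ * ((1+s*y₀)*x - f₀*(1+s*y)))]
      linarith [h8, hfw]
    have hdisk : x ^ 2 + y ^ 2 < 1 := by
      have h9 := aux3 (s := s) (Y := y₀) (F := f₀) (G := g₀) (X := x) (yv := y) hs1
      nlinarith only [h9, hQp, mul_pos hyb_pos hG1,
        mul_pos (mul_pos hyb_pos hyb_pos)
          (show (0:ℝ) < 1 - f₀^2 - g₀^2 by linarith only [hfg]),
        mul_pos hσpos hσpos]
    have hyl : -1 < y := by nlinarith only [hdisk, sq_nonneg x, sq_nonneg (y + 1)]
    have hyr : y < 1 := by nlinarith only [hdisk, sq_nonneg x, sq_nonneg (y - 1)]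
    have hneF : ¬(x = f₀ ∧ y = g₀) := by
      rintro ⟨h1, h2⟩
      rw [h1, h2] at hQp
      have h5 := aux5 (s := s) (Y := y₀) (F := f₀) (G := g₀) hs1
      nlinarith only [h5, hQp, mul_pos (mul_pos hδpos hδpos)
        (show (0:ℝ) < 1 - (f₀^2 + g₀^2) by linarith only [hfg])]
    have hn2pos : 0 < (x - f₀) ^ 2 + (y - g₀) ^ 2 := by
      rcases not_and_or.mp hneF with h | h
      · have := mul_self_pos.mpr (sub_ne_zero_of_ne h)
        nlinarith only [this, sq_nonneg (y - g₀)]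
      · have := mul_self_pos.mpr (sub_ne_zero_of_ne h)
        nlinarith only [this, sq_nonneg (x - f₀)]
    have hMpos : 0 < (x*(x-f₀)+y*(y-g₀))*(1+s*y₀) - (f₀*(x-f₀)+g₀*(y-g₀))*(1+s*y) := by
      have h4 := aux4 (s := s) (Y := y₀) (F := f₀) (G := g₀) (X := x) (yv := y) hs1
      nlinarith only [h4, hQp, hσpos,
        mul_pos (show (0:ℝ) < (1+s*y₀)-(1+s*y) by linarith only [hyblt]) hG1]
    set a := f₀ * (x - f₀) + g₀ * (y - g₀) with ha
    set b := x * (x - f₀) + y * (y - g₀) with hbd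
    set n2 := (x - f₀) ^ 2 + (y - g₀) ^ 2 with hn2d
    set K := a ^ 2 + (1 - (f₀ ^ 2 + g₀ ^ 2)) * n2 with hKd
    set r := Real.sqrt K with hrd
    have hK0 : 0 < K := by
      rw [hKd]
      nlinarith only [sq_nonneg a, mul_pos (show (0:ℝ) < 1 - (f₀ ^ 2 + g₀ ^ 2) by
        linarith only [hfg]) hn2pos]
    have hr2 : r ^ 2 = K := Real.sq_sqrt hK0.le
    have hr0 : 0 < r := Real.sqrt_pos.mpr hK0
    have h1 := aux1 (s := s) (Y := y₀) (F := f₀) (G := g₀) (X := x) (yv := y) hs1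
    rw [← ha, ← hbd, ← hn2d, ← hKd] at h1
    have hK2 : K * (y₀ - y) ^ 2 = (b*(1+s*y₀) - a*(1+s*y)) ^ 2 := by
      linear_combination h1 - n2 * hQp
    have h9 := aux9 (s := s) (Y := y₀) (yv := y) hs1
    have hsq2 : (r * ((1+s*y₀)-(1+s*y)))^2 = (b*(1+s*y₀) - a*(1+s*y))^2 := by
      rw [mul_pow, hr2, h9, hK2]
    have hry : r * ((1+s*y₀)-(1+s*y)) = b*(1+s*y₀) - a*(1+s*y) := by
      have hz : (r * ((1+s*y₀)-(1+s*y)) - (b*(1+s*y₀) - a*(1+s*y)))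
          * (r * ((1+s*y₀)-(1+s*y)) + (b*(1+s*y₀) - a*(1+s*y))) = 0 := by
        linear_combination hsq2
      rcases mul_eq_zero.mp hz with h | h
      · linarith only [h]
      · exfalso
        have hl : 0 < r * ((1+s*y₀)-(1+s*y)) := mul_pos hr0 (by linarith only [hyblt])
        linarith only [hMpos, hl, h]
    have hsgn : Real.sign (y₀ - y) = s := by
      rcases hs1 with h | h <;> rw [h] at hyblt ⊢
      · exact Real.sign_of_pos (by linarith only [hyblt])
      · exact Real.sign_of_neg (by linarith only [hyblt])
    have hbr : b < r := by
      have hKb : K - b ^ 2 = n2 * (1 - x ^ 2 - y ^ 2) := by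
        rw [hKd, ha, hbd, hn2d]; ring
      nlinarith only [hKb, hr2, hr0, sq_nonneg (r - b), sq_nonneg (r + b),
        mul_pos hn2pos (show (0:ℝ) < 1 - x ^ 2 - y ^ 2 by linarith only [hdisk])]
    refine ⟨(norm_pt_lt_one x y).mpr hdisk, ?_, ?_⟩
    · intro hcon
      exact hneF ((pt_eq_iff x y f₀ g₀).mp hcon)
    · rw [funkDist_pt]
      rw [← ha, ← hbd, ← hn2d, ← hKd, ← hrd]
      have hrho : rho y₀ y = (1 + s * y₀) / (1 + s * y) := by
        simp only [rho, hsgn]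
      rw [hrho]
      congr 1
      rw [div_eq_div_iff (by linarith only [hbr]) (by linarith only [hyb_pos])]
      linear_combination -hry
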